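/- Let X and Y be separable real Banach spaces, let (e_n)_{n∈ℕ} be a linearly independent sequence whose linear span is dense in X, let (f_n)_{n∈ℕ} be a linearly independent sequence whose linear span is dense in Y, and put V = span_ℚ{e_n : n ∈ ℕ} and W = span_ℚ{f_n : n ∈ ℕ}. Let T : X → Y be an isomorphism and let v₁, …, v_n, v ∈ V be such that T v_j ∈ W for 1 ≤ j ≤ n. Then, given η > 0, there is an isomorphism S : X → Y such that ‖S − T‖ ≤ η and ‖S⁻¹ − T⁻¹‖ ≤ η, S v_j = T v_j for 1 ≤ j ≤ n, and S v ∈ W. -/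

import Mathlib

/- Context: an isomorphism between Banach spaces is a surjective bounded linear bijection
with bounded inverse (a continuous linear equivalence).  For a sequence (e n) in a real
Banach space, span_ℚ{e n} is the set of finite linear combinations with rational
coefficients. -/

open Finsupp Submodule Set

noncomputable def castL : (ℕ →₀ ℚ) →ₗ[ℚ] (ℕ →₀ ℝ) :=
  Finsupp.mapRange.linearMap (Algebra.linearMap ℚ ℝ)

lemma castL_apply (d : ℕ →₀ ℚ) (i : ℕ) : castL d i = (d i : ℝ) := by
  simp [castL, eq_ratCast]

lemma castL_qsmul (q : ℚ) (d : ℕ →₀ ℚ) : castL (q • d) = (q : ℝ) • castL d := by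
  rw [map_smul]
  ext i
  simp [castL_apply, Rat.smul_def]

lemma set_eq_aux {Z : Type*} [AddCommGroup Z] [Module ℝ Z] (g : ℕ → Z) (x : Z) :
    (∃ (s : Finset ℕ) (c : ℕ → ℚ), x = ∑ i ∈ s, (c i : ℝ) • g i) ↔
    ∃ E : ℕ →₀ ℚ, x = Finsupp.linearCombination ℝ g (castL E) := by
  constructor
  · rintro ⟨s, c, rfl⟩
    refine ⟨∑ i ∈ s, Finsupp.single i (c i), ?_⟩
    rw [map_sum, map_sum]
    refine Finset.sum_congr rfl fun i _ => ?_
    have : castL (Finsupp.single i (c i)) = Finsupp.single i ((c i : ℝ)) := by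
      simp [castL, eq_ratCast]
    rw [this, Finsupp.linearCombination_single]
  · rintro ⟨E, rfl⟩
    refine ⟨E.support, fun i => E i, ?_⟩
    rw [Finsupp.linearCombination_apply]
    simp only [castL, Finsupp.mapRange.linearMap_apply]
    rw [Finsupp.sum_mapRange_index (fun i => zero_smul ℝ (g i))]
    simp [Finsupp.sum, eq_ratCast]

lemma key_descent {n : ℕ} (d : Fin n → ℕ →₀ ℚ) (d₀ : ℕ →₀ ℚ) (a : Fin n → ℝ)
    (h : castL d₀ = ∑ j, a j • castL (d j)) :
    ∃ q : Fin n → ℚ, d₀ = ∑ j, q j • d j := by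
  by_contra hcon
  have hmem : d₀ ∉ Submodule.span ℚ (Set.range d) := by
    intro hm
    obtain ⟨q, hq⟩ := (mem_span_range_iff_exists_fun ℚ).mp hm
    exact hcon ⟨q, hq.symm⟩
  set U := Submodule.span ℚ (Set.range d)
  have hne : Submodule.Quotient.mk (p := U) d₀ ≠ 0 := by
    simpa [Submodule.Quotient.mk_eq_zero] using hmem
  have : ¬ ∀ ψ : Module.Dual ℚ ((ℕ →₀ ℚ) ⧸ U), ψ (Submodule.Quotient.mk d₀) = 0 := by
    rw [Module.forall_dual_apply_eq_zero_iff]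
    exact hne
  push_neg at this
  obtain ⟨ψ, hψ⟩ := this
  set φ : (ℕ →₀ ℚ) →ₗ[ℚ] ℚ := ψ.comp U.mkQ with hφdef
  have hφd : ∀ j, φ (d j) = 0 := by
    intro j
    have : d j ∈ U := Submodule.subset_span (Set.mem_range_self j)
    simp [hφdef, (Submodule.Quotient.mk_eq_zero U).mpr this]
  have hφ0 : φ d₀ ≠ 0 := hψ
  -- build real functional
  set Φ : (ℕ →₀ ℝ) →ₗ[ℝ] ℝ :=
    Finsupp.linearCombination ℝ (fun i => (φ (Finsupp.single i 1) : ℝ)) with hΦdef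
  have hΦcast : ∀ x : ℕ →₀ ℚ, Φ (castL x) = (φ x : ℝ) := by
    intro x
    have h1 : Φ (castL x) = x.sum fun i c => (c : ℝ) * (φ (Finsupp.single i 1) : ℝ) := by
      rw [hΦdef, Finsupp.linearCombination_apply]
      simp only [castL, Finsupp.mapRange.linearMap_apply]
      rw [Finsupp.sum_mapRange_index (fun i => zero_smul ℝ ((φ (Finsupp.single i 1) : ℝ)))]
      simp [eq_ratCast, smul_eq_mul]
    have h2 : φ x = x.sum fun i c => c * φ (Finsupp.single i 1) := by
      conv_lhs => rw [← Finsupp.sum_single x]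
      rw [map_finsuppSum]
      refine Finsupp.sum_congr fun i _ => ?_
      have : Finsupp.single i (x i) = x i • Finsupp.single i (1 : ℚ) := by
        rw [Finsupp.smul_single, smul_eq_mul, mul_one]
      rw [this, map_smul, smul_eq_mul]
    rw [h1, h2, Finsupp.sum, Finsupp.sum]
    push_cast
    rfl
  have hzero : (φ d₀ : ℝ) = 0 := by
    rw [← hΦcast, h, map_sum]
    simp only [map_smul, hΦcast]
    simp [hφd]
  exact hφ0 (by exact_mod_cast hzero)

lemma descent {X : Type*} [AddCommGroup X] [Module ℝ X] (e : ℕ → X)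
    (he : LinearIndependent ℝ e) {n : ℕ} (v : Fin n → X) (v₀ : X)
    (d : Fin n → ℕ →₀ ℚ) (d₀ : ℕ →₀ ℚ)
    (hvj : ∀ j, v j = Finsupp.linearCombination ℝ e (castL (d j)))
    (hv0 : v₀ = Finsupp.linearCombination ℝ e (castL d₀))
    (hsp : v₀ ∈ Submodule.span ℝ (Set.range v)) :
    ∃ q : Fin n → ℚ, v₀ = ∑ j, (q j : ℝ) • v j := by
  obtain ⟨a, ha⟩ := (mem_span_range_iff_exists_fun ℝ).mp hsp
  have hinj : Function.Injective (Finsupp.linearCombination ℝ e) := he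
  have heq : castL d₀ = ∑ j, a j • castL (d j) := by
    apply hinj
    rw [← hv0, map_sum]
    simp only [map_smul]
    rw [← ha]
    exact Finset.sum_congr rfl fun j _ => by rw [hvj j]
  obtain ⟨q, hq⟩ := key_descent d d₀ a heq
  refine ⟨q, ?_⟩
  rw [hv0, hq, map_sum, map_sum]
  refine Finset.sum_congr rfl fun j _ => ?_
  rw [castL_qsmul, map_smul, hvj j]

lemma dense_rat_span {Y : Type*} [NormedAddCommGroup Y] [NormedSpace ℝ Y] (f : ℕ → Y)
    (hdf : Dense ((Submodule.span ℝ (Set.range f) : Submodule ℝ Y) : Set Y))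
    (y : Y) (ε : ℝ) (hε : 0 < ε) :
    ∃ (s : Finset ℕ) (c : ℕ → ℚ), ‖(∑ i ∈ s, (c i : ℝ) • f i) - y‖ < ε := by
  classical
  have hy := Metric.mem_closure_iff.mp (hdf y) (ε/2) (by linarith)
  obtain ⟨z, hz, hzy⟩ := hy
  obtain ⟨c, hc⟩ := Finsupp.mem_span_range_iff_exists_finsupp.mp hz
  set s := c.support
  set m : ℝ := (s.card : ℝ)
  have hm : 0 ≤ m := Nat.cast_nonneg _
  have hpos : ∀ i : ℕ, 0 < ε / (2 * (m + 1) * (‖f i‖ + 1)) := by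
    intro i
    have h1 : 0 < ‖f i‖ + 1 := by positivity
    positivity
  choose q hq using fun i => exists_rat_near (K := ℝ) (c i) (hpos i)
  refine ⟨s, q, ?_⟩
  have hterm : ∀ i ∈ s, ‖(q i : ℝ) • f i - c i • f i‖ ≤ ε / (2 * (m + 1)) := by
    intro i _
    rw [← sub_smul, norm_smul]
    have h1 : ‖(q i : ℝ) - c i‖ ≤ ε / (2 * (m + 1) * (‖f i‖ + 1)) := by
      rw [Real.norm_eq_abs, abs_sub_comm]
      exact le_of_lt (hq i)
    have h2 : 0 ≤ ‖f i‖ := norm_nonneg _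
    calc ‖(q i : ℝ) - c i‖ * ‖f i‖
        ≤ (ε / (2 * (m + 1) * (‖f i‖ + 1))) * (‖f i‖ + 1) := by
          apply mul_le_mul h1 (by linarith) h2 (le_of_lt (hpos i))
      _ = ε / (2 * (m + 1)) := by
          field_simp
  have hsz : ‖(∑ i ∈ s, (q i : ℝ) • f i) - z‖ ≤ ε / 2 := by
    have hzc : z = ∑ i ∈ s, c i • f i := by rw [← hc]; rfl
    rw [hzc, ← Finset.sum_sub_distrib]
    calc ‖∑ i ∈ s, ((q i : ℝ) • f i - c i • f i)‖
        ≤ ∑ i ∈ s, ‖(q i : ℝ) • f i - c i • f i‖ := norm_sum_le _ _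
      _ ≤ ∑ _i ∈ s, ε / (2 * (m + 1)) := Finset.sum_le_sum hterm
      _ = m * (ε / (2 * (m + 1))) := by rw [Finset.sum_const, nsmul_eq_mul]
      _ ≤ ε / 2 := by
          rw [mul_div_assoc', div_le_div_iff₀ (by positivity) (by norm_num)]
          nlinarith
  calc ‖(∑ i ∈ s, (q i : ℝ) • f i) - y‖
      ≤ ‖(∑ i ∈ s, (q i : ℝ) • f i) - z‖ + ‖z - y‖ := norm_sub_le_norm_sub_add_norm_sub _ _ _
    _ < ε/2 + ε/2 := by
        apply add_lt_add_of_le_of_lt hsz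
        rw [← dist_eq_norm, dist_comm]
        exact hzy
    _ = ε := by ring

lemma exists_functional {X : Type*} [NormedAddCommGroup X] [NormedSpace ℝ X]
    {n : ℕ} (v : Fin n → X) (v₀ : X)
    (h : v₀ ∉ Submodule.span ℝ (Set.range v)) :
    ∃ φ : X →L[ℝ] ℝ, φ v₀ = 1 ∧ ∀ x ∈ Submodule.span ℝ (Set.range v), φ x = 0 := by
  set K := Submodule.span ℝ (Set.range v)
  haveI : FiniteDimensional ℝ K := FiniteDimensional.span_of_finite ℝ (Set.finite_range v)
  have hcl : IsClosed (K : Set X) := Submodule.closed_of_finiteDimensional K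
  obtain ⟨f, u, hfu, huv⟩ := geometric_hahn_banach_closed_point K.convex hcl h
  have hf0 : ∀ x ∈ K, f x = 0 := by
    intro x hx
    by_contra hne
    have ht : ((u + 1) / f x) • x ∈ K := K.smul_mem _ hx
    have := hfu _ ht
    rw [map_smul, smul_eq_mul, div_mul_cancel₀ _ hne] at this
    linarith
  have hu : 0 < u := by
    have := hfu 0 K.zero_mem
    rw [map_zero] at this
    linarith
  have hfv : f v₀ ≠ 0 := by linarith
  refine ⟨(f v₀)⁻¹ • f, ?_, ?_⟩
  · simp [inv_mul_cancel₀ hfv]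
  · intro x hx
    simp [hf0 x hx]

set_option maxHeartbeats 1000000 in
theorem stmt7 (X Y : Type*)
    [NormedAddCommGroup X] [NormedSpace ℝ X] [CompleteSpace X]
    [TopologicalSpace.SeparableSpace X]
    [NormedAddCommGroup Y] [NormedSpace ℝ Y] [CompleteSpace Y]
    [TopologicalSpace.SeparableSpace Y]
    (e : ℕ → X) (f : ℕ → Y)
    (he : LinearIndependent ℝ e) (hf : LinearIndependent ℝ f)
    (hde : Dense ((Submodule.span ℝ (Set.range e) : Submodule ℝ X) : Set X))
    (hdf : Dense ((Submodule.span ℝ (Set.range f) : Submodule ℝ Y) : Set Y))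
    (V : Set X)
    (hV : V = {x : X | ∃ (s : Finset ℕ) (c : ℕ → ℚ), x = ∑ i ∈ s, (c i : ℝ) • e i})
    (W : Set Y)
    (hW : W = {y : Y | ∃ (s : Finset ℕ) (c : ℕ → ℚ), y = ∑ i ∈ s, (c i : ℝ) • f i})
    (T : X ≃L[ℝ] Y) (n : ℕ) (v : Fin n → X) (hv : ∀ j, v j ∈ V)
    (hTv : ∀ j, T (v j) ∈ W)
    (v₀ : X) (hv₀ : v₀ ∈ V)
    (η : ℝ) (hη : 0 < η) :
    ∃ S : X ≃L[ℝ] Y,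
      ‖(S : X →L[ℝ] Y) - (T : X →L[ℝ] Y)‖ ≤ η ∧
      ‖(S.symm : Y →L[ℝ] X) - (T.symm : Y →L[ℝ] X)‖ ≤ η ∧
      (∀ j, S (v j) = T (v j)) ∧
      S v₀ ∈ W := by
  classical
  by_cases hsp : v₀ ∈ Submodule.span ℝ (Set.range v)
  · -- degenerate case: S = T
    refine ⟨T, by simp [le_of_lt hη], by simp [le_of_lt hη], fun j => rfl, ?_⟩
    -- rational coordinates
    have hvj' : ∀ j, ∃ E : ℕ →₀ ℚ, v j = Finsupp.linearCombination ℝ e (castL E) := by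
      intro j
      exact (set_eq_aux e (v j)).mp (by rw [hV] at hv; exact hv j)
    choose d hd using hvj'
    obtain ⟨d₀, hd₀⟩ := (set_eq_aux e v₀).mp (by rw [hV] at hv₀; exact hv₀)
    obtain ⟨q, hq⟩ := descent e he v v₀ d d₀ hd hd₀ hsp
    have hTvj' : ∀ j, ∃ E : ℕ →₀ ℚ, T (v j) = Finsupp.linearCombination ℝ f (castL E) := by
      intro j
      exact (set_eq_aux f (T (v j))).mp (by rw [hW] at hTv; exact hTv j)
    choose D hD using hTvj'
    have : T v₀ = Finsupp.linearCombination ℝ f (castL (∑ j, q j • D j)) := by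
      rw [hq, map_sum, map_sum, map_sum]
      refine Finset.sum_congr rfl fun j _ => ?_
      rw [map_smul, castL_qsmul, map_smul, hD j]
    rw [hW]
    exact (set_eq_aux f (T v₀)).mpr ⟨_, this⟩
  · -- nondegenerate case
    obtain ⟨φ, hφ1, hφ0⟩ := exists_functional v v₀ hsp
    set Kn : ℝ := ‖(T.symm : Y →L[ℝ] X)‖ with hKn
    set C : ℝ := ‖φ‖ with hC
    have hKnn : 0 ≤ Kn := norm_nonneg _
    have hCn : 0 ≤ C := norm_nonneg _
    set B : ℝ := 1 + C + Kn*C + 2*Kn^2*C with hB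
    have hBpos : 0 < B := by positivity
    set ε : ℝ := min η (1/2) / B with hε
    have hεpos : 0 < ε := by
      apply div_pos _ hBpos
      exact lt_min hη (by norm_num)
    have hBε : B * ε = min η (1/2) := by
      rw [hε, mul_div_cancel₀ _ (ne_of_gt hBpos)]
    obtain ⟨s, c, hwc⟩ := dense_rat_span f hdf (T v₀) ε hεpos
    set w : Y := ∑ i ∈ s, (c i : ℝ) • f i with hw
    have hwW : w ∈ W := by rw [hW]; exact ⟨s, c, rfl⟩
    set g : X →L[ℝ] Y := φ.smulRight (w - T v₀) with hg
    have hgn : ‖g‖ ≤ C * ε := by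
      rw [hg, ContinuousLinearMap.norm_smulRight_apply]
      exact mul_le_mul_of_nonneg_left (le_of_lt hwc) hCn
    set h : X →L[ℝ] X := (T.symm : Y →L[ℝ] X).comp g with hh
    have hhn : ‖h‖ ≤ Kn * (C * ε) :=
      le_trans (ContinuousLinearMap.opNorm_comp_le _ _) (mul_le_mul_of_nonneg_left hgn hKnn)
    have hKCε : Kn * (C * ε) ≤ 1/2 := by
      have h1 : Kn * C * ε ≤ B * ε := by
        apply mul_le_mul_of_nonneg_right _ (le_of_lt hεpos)
        nlinarith
      rw [mul_assoc] at h1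
      exact le_trans h1 (hBε ▸ min_le_right _ _)
    have hhalf : ‖h‖ ≤ 1/2 := le_trans hhn hKCε
    have hlt1 : ‖-h‖ < 1 := by rw [norm_neg]; linarith
    set u : (X →L[ℝ] X)ˣ := Units.oneSub (-h) hlt1 with hu
    set S : X ≃L[ℝ] Y := (ContinuousLinearEquiv.unitsEquiv ℝ X u).trans T with hS
    have huval : (u : X →L[ℝ] X) = 1 + h := by
      rw [hu, Units.val_oneSub, sub_neg_eq_add]
    have hSapp : ∀ x, S x = T x + g x := by
      intro x
      rw [hS]
      simp only [ContinuousLinearEquiv.trans_apply, ContinuousLinearEquiv.unitsEquiv_apply]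
      rw [huval]
      simp only [ContinuousLinearMap.add_apply, ContinuousLinearMap.one_apply]
      rw [map_add, hh]
      simp
    have hST : (S : X →L[ℝ] Y) - (T : X →L[ℝ] Y) = g := by
      ext x
      simp [hSapp x]
    have hεη : C * ε ≤ η := by
      have h1 : C * ε ≤ B * ε := by
        apply mul_le_mul_of_nonneg_right _ (le_of_lt hεpos)
        nlinarith
      exact le_trans h1 (hBε ▸ min_le_left _ _)
    refine ⟨S, ?_, ?_, ?_, ?_⟩
    · rw [hST]; exact le_trans hgn hεη
    · -- inverse bound
      set i : X →L[ℝ] X := ((u⁻¹ : (X →L[ℝ] X)ˣ) : X →L[ℝ] X) with hi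
      have hiu : i * (u : X →L[ℝ] X) = 1 := Units.inv_mul u
      have hieq : i = 1 - i * h := by
        rw [huval, mul_add, mul_one] at hiu
        rw [← hiu]; abel
      have hin : ‖i‖ ≤ 2 := by
        have h1 : ‖i‖ ≤ ‖(1 : X →L[ℝ] X)‖ + ‖i‖ * ‖h‖ := by
          calc ‖i‖ = ‖1 - i * h‖ := by rw [← hieq]
            _ ≤ ‖(1 : X →L[ℝ] X)‖ + ‖i * h‖ := norm_sub_le _ _
            _ ≤ ‖(1 : X →L[ℝ] X)‖ + ‖i‖ * ‖h‖ := by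
                gcongr
                exact norm_mul_le _ _
        have hone : ‖(1 : X →L[ℝ] X)‖ ≤ 1 := by
          rw [ContinuousLinearMap.one_def]
          exact ContinuousLinearMap.norm_id_le
        nlinarith [norm_nonneg i, hhalf, norm_nonneg h]
      have hi1 : ‖i - 1‖ ≤ 2 * ‖h‖ := by
        have hiu' : i + i * h = 1 := by rw [huval, mul_add, mul_one] at hiu; exact hiu
        have hneg : i - 1 = -(i * h) := by rw [← hiu']; abel
        calc ‖i - 1‖ = ‖i * h‖ := by rw [hneg, norm_neg]
          _ ≤ ‖i‖ * ‖h‖ := norm_mul_le _ _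
          _ ≤ 2 * ‖h‖ := mul_le_mul_of_nonneg_right hin (norm_nonneg _)
      have hSsymm : (S.symm : Y →L[ℝ] X) = i.comp (T.symm : Y →L[ℝ] X) := by
        ext y
        rfl
      have hdiff : (S.symm : Y →L[ℝ] X) - (T.symm : Y →L[ℝ] X)
          = (i - 1).comp (T.symm : Y →L[ℝ] X) := by
        rw [hSsymm]
        ext y
        simp [ContinuousLinearMap.sub_apply]
      rw [hdiff]
      calc ‖(i - 1).comp (T.symm : Y →L[ℝ] X)‖
          ≤ ‖i - 1‖ * Kn := ContinuousLinearMap.opNorm_comp_le _ _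
        _ ≤ (2 * ‖h‖) * Kn := mul_le_mul_of_nonneg_right hi1 hKnn
        _ ≤ (2 * (Kn * (C * ε))) * Kn := by
            apply mul_le_mul_of_nonneg_right _ hKnn
            linarith
        _ = (2*Kn^2*C) * ε := by ring
        _ ≤ B * ε := by
            apply mul_le_mul_of_nonneg_right _ (le_of_lt hεpos)
            nlinarith
        _ ≤ η := hBε ▸ min_le_left _ _
    · intro j
      rw [hSapp, hg]
      simp [hφ0 (v j) (Submodule.subset_span (Set.mem_range_self j))]
    · rw [hSapp, hg]
      simp only [ContinuousLinearMap.smulRight_apply, hφ1, one_smul]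
      simpa using hwW
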